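/- Let G₁ and G₂ be finitely generated groups with finite generating sets S₁ and S₂, with walk-through functions g₁ and g₂ and critical probabilities p_c(G₁) and p_c(G₂) of their respective Cayley graphs. Then for every p with 0 < p < min(p_c(G₁), p_c(G₂)), the function t ↦ g₂(p, g₁(p,t)) − t is concave on the interval [0,1]. -/

import Mathlib

open MeasureTheory ENNReal

namespace Perc

/-- Percolation configurations on the edge set `E`: each edge is `true` (open) or
`false` (closed). -/
abbrev Config (E : Type*) := E → Bool

/-- `μ` is the Bernoulli product measure `P_p` with parameter `p` on `{0,1}^E`: the measure
of every finite cylinder event is the corresponding product.  (This determines `μ` uniquely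
on the product σ-algebra, since cylinders form a π-system generating it.) -/
def IsBernoulli {E : Type*} (p : ℝ) (μ : Measure (Config E)) : Prop :=
  ∀ (F : Finset E) (σ : E → Bool),
    μ {ω | ∀ e ∈ F, ω e = σ e} =
      ∏ e ∈ F, ENNReal.ofReal (if σ e then p else 1 - p)

variable {G ι : Type*} [Group G]

/-- In the Cayley graph of `G` with edge set `G × ι`, where the edge `(a, i)` joins `a` and
`a * f i` (the function `f : ι → G` lists the generators, with multiplicity), this says that
vertices `a` and `b` are joined by some open edge of the configuration `ω`. -/
def Step (f : ι → G) (ω : Config (G × ι)) (a b : G) : Prop :=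
  ∃ i : ι, (ω (a, i) = true ∧ b = a * f i) ∨ (ω (b, i) = true ∧ a = b * f i)

/-- `x` and `y` are connected by a path of open edges (`x ↔ y`). -/
def Conn (f : ι → G) (ω : Config (G × ι)) (x y : G) : Prop :=
  Relation.ReflTransGen (Step f ω) x y

/-- The open cluster `C` of the identity. -/
def cluster (f : ι → G) (ω : Config (G × ι)) : Set G :=
  {x | Conn f ω 1 x}

/-- The percolation function `θ`: the probability that the cluster of the identity is
infinite. -/
noncomputable def theta (f : ι → G) (μ : Measure (Config (G × ι))) : ℝ :=
  (μ {ω | (cluster f ω).Infinite}).toReal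

/-- The expected cluster size `χ = E(|C|) ∈ [0,∞]` (where `|C| ∈ ℕ∞` is coerced
to `ℝ≥0∞`). -/
noncomputable def chi (f : ι → G) (μ : Measure (Config (G × ι))) : ℝ≥0∞ :=
  ∫⁻ ω, ((cluster f ω).encard : ℝ≥0∞) ∂μ

/-- The critical probability `p_c = inf {p ∈ [0,1] | θ(p) > 0}`, with the convention
`p_c = 1` if `θ` vanishes on `[0,1]`; here `μ p` is the percolation measure at
parameter `p`. -/
noncomputable def pc (f : ι → G) (μ : ℝ → Measure (Config (G × ι))) : ℝ :=
  sInf ({p | p ∈ Set.Icc (0 : ℝ) 1 ∧ 0 < theta f (μ p)} ∪ {1})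

/-- The word metric on `G` with respect to the generators `f i`: the length of a shortest
word in the generators and their inverses taking `x` to `y`.  (When the generators generate
`G`, this is the graph distance in the Cayley graph.) -/
noncomputable def wdist (f : ι → G) (x y : G) : ℕ :=
  sInf {n : ℕ | ∃ l : List G, l.length = n ∧
    (∀ g ∈ l, (∃ i, f i = g) ∨ (∃ i, (f i)⁻¹ = g)) ∧ x * l.prod = y}

/-- Schonmann's critical point
`p_exp = sup {p ∈ [0,1] | ∃ c > 0, γ > 0, ∀ x y, P_p(x ↔ y) ≤ c·exp(-γ·dist(x,y))}`. -/
noncomputable def pexp (f : ι → G) (μ : ℝ → Measure (Config (G × ι))) : ℝ :=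
  sSup {p | p ∈ Set.Icc (0 : ℝ) 1 ∧ ∃ c > 0, ∃ γ > 0, ∀ x y : G,
    (μ p {ω | Conn f ω x y}).toReal ≤ c * Real.exp (-γ * (wdist f x y : ℝ))}

/-- The walk-through function `g(p,t) = 1 - ∑_{n≥1} (1-t)^{n-1} P_p(|C| = n)` of a Cayley
graph; here `μ` is the percolation measure at parameter `p`. -/
noncomputable def wt (f : ι → G) (μ : Measure (Config (G × ι))) (t : ℝ) : ℝ :=
  1 - ∑' n : ℕ, (1 - t) ^ n * (μ {ω | (cluster f ω).encard = ((n + 1 : ℕ) : ℕ∞)}).toReal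

/-- The ball of radius `j`: all products of at most `j` elements of `S ∪ S⁻¹`. -/
def ball (S : Set G) (j : ℕ) : Set G :=
  {g | ∃ l : List G, l.length ≤ j ∧ (∀ x ∈ l, x ∈ S ∨ x⁻¹ ∈ S) ∧ l.prod = g}

/-- The Cheeger constant `h = inf_K |∂K| / |K|`, the infimum over nonempty finite vertex
sets `K` of the number of edges `(a, i)` (joining `a` and `a * f i`) with exactly one
endpoint in `K`, divided by `|K|`. -/
noncomputable def cheeger (f : ι → G) : ℝ :=
  ⨅ K : {K : Finset G // K.Nonempty},
    (Nat.card {e : G × ι // Xor' (e.1 ∈ K.1) (e.1 * f e.2 ∈ K.1)} : ℝ) / (K.1.card : ℝ)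

/-- The open cluster of the identity in the subgraph induced on the vertex set `V`: only
open edges with both endpoints in `V` may be used. -/
def clusterIn (f : ι → G) (V : Set G) (ω : Config (G × ι)) : Set G :=
  {x | Relation.ReflTransGen (fun a b => Step f ω a b ∧ a ∈ V ∧ b ∈ V) 1 x}

/-- The generators of `G` given by a generating set `S` (one edge orbit per element
of `S`). -/
def setGens (S : Set G) : S → G := Subtype.val

/-- The generators of the free product `G₁ * G₂` given by the disjoint union `S₁ ⊔ S₂` of
generating sets, embedded via the canonical monomorphisms. -/
def coprodGens {G₁ G₂ : Type*} [Group G₁] [Group G₂] (S₁ : Set G₁) (S₂ : Set G₂) :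
    S₁ ⊕ S₂ → Monoid.Coprod G₁ G₂ :=
  Sum.elim (fun s => Monoid.Coprod.inl (s : G₁)) (fun s => Monoid.Coprod.inr (s : G₂))

/-- The generators of the free product `G₁ * ⋯ * G_n` given by the disjoint union
`S₁ ⊔ ⋯ ⊔ S_n` of generating sets, embedded via the canonical monomorphisms. -/
def coprodIGens {n : ℕ} {G : Fin n → Type*} [∀ i, Group (G i)] (S : ∀ i, Set (G i)) :
    (Σ i, S i) → Monoid.CoprodI G :=
  fun x => Monoid.CoprodI.of (x.2 : G x.1)

/-- The image of a list of syllables in the free product `G₁ * G₂`. -/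
def sylProd {G₁ G₂ : Type*} [Group G₁] [Group G₂] (l : List (G₁ ⊕ G₂)) :
    Monoid.Coprod G₁ G₂ :=
  (l.map (Sum.elim (fun g => Monoid.Coprod.inl g) (fun h => Monoid.Coprod.inr h))).prod

/-- The set `P₁` of nontrivial elements of `G₁ * G₂` whose normal form begins with a
nontrivial syllable of `G₁`: elements represented by a nonempty alternating product of
nontrivial syllables, the first syllable lying in `G₁`.  (Such a representation is the
normal form, which is unique.) -/
def beginsLeft {G₁ G₂ : Type*} [Group G₁] [Group G₂] (x : Monoid.Coprod G₁ G₂) : Prop :=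
  ∃ l : List (G₁ ⊕ G₂), l ≠ [] ∧ (∀ a ∈ l, a ≠ Sum.inl 1 ∧ a ≠ Sum.inr 1) ∧
    l.Chain' (fun a b => a.isLeft ≠ b.isLeft) ∧
    (∃ g : G₁, l.head? = some (Sum.inl g)) ∧ sylProd l = x

/-- The set `P₂` of nontrivial elements of `G₁ * G₂` whose normal form begins with a
nontrivial syllable of `G₂`. -/
def beginsRight {G₁ G₂ : Type*} [Group G₁] [Group G₂] (x : Monoid.Coprod G₁ G₂) : Prop :=
  ∃ l : List (G₁ ⊕ G₂), l ≠ [] ∧ (∀ a ∈ l, a ≠ Sum.inl 1 ∧ a ≠ Sum.inr 1) ∧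
    l.Chain' (fun a b => a.isLeft ≠ b.isLeft) ∧
    (∃ h : G₂, l.head? = some (Sum.inr h)) ∧ sylProd l = x

end Perc

open Perc

namespace PercAux

open Perc Set

variable {G ι : Type*} [Group G]

lemma ms_edge (e : G × ι) (P : Prop) :
    MeasurableSet {ω : Config (G × ι) | ω e = true ∧ P} := by
  by_cases hP : P
  · have h : {ω : Config (G × ι) | ω e = true ∧ P}
        = (fun ω : Config (G × ι) => ω e) ⁻¹' {true} := by
      ext ω; simp [hP]
    rw [h]; exact measurable_pi_apply _ (measurableSet_singleton true)
  · have h : {ω : Config (G × ι) | ω e = true ∧ P} = ∅ := by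
      ext ω; simp [hP]
    rw [h]; exact MeasurableSet.empty

lemma measurableSet_step [Countable ι] (f : ι → G) (a b : G) :
    MeasurableSet {ω : Config (G × ι) | Step f ω a b} := by
  have h : {ω : Config (G × ι) | Step f ω a b} =
      ⋃ i : ι, ({ω : Config (G × ι) | ω (a, i) = true ∧ b = a * f i}
        ∪ {ω : Config (G × ι) | ω (b, i) = true ∧ a = b * f i}) := by
    ext ω
    simp only [Step, Set.mem_iUnion, Set.mem_union, Set.mem_setOf_eq]
  rw [h]
  exact MeasurableSet.iUnion fun i => (ms_edge _ _).union (ms_edge _ _)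

lemma measurableSet_chain [Countable ι] (f : ι → G) (l : List G) (x : G) :
    MeasurableSet {ω : Config (G × ι) | List.Chain (Step f ω) x l} := by
  induction l generalizing x with
  | nil =>
      have h : {ω : Config (G × ι) | List.Chain (Step f ω) x []} = Set.univ := by
        ext ω
        simp only [Set.mem_setOf_eq, Set.mem_univ, iff_true]
        exact List.Chain.nil
      rw [h]; exact MeasurableSet.univ
  | cons b l ih =>
      have h : {ω : Config (G × ι) | List.Chain (Step f ω) x (b :: l)} =
          {ω : Config (G × ι) | Step f ω x b} ∩
            {ω : Config (G × ι) | List.Chain (Step f ω) b l} := by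
        ext ω; simp [List.Chain, List.isChain_cons_cons]
      rw [h]
      exact (measurableSet_step f x b).inter (ih b)

lemma measurableSet_conn [Countable G] [Countable ι] (f : ι → G) (x y : G) :
    MeasurableSet {ω : Config (G × ι) | Conn f ω x y} := by
  have h : {ω : Config (G × ι) | Conn f ω x y} =
      ⋃ l : List G, ⋃ (_ : (x :: l).getLast (List.cons_ne_nil _ _) = y),
        {ω : Config (G × ι) | List.Chain (Step f ω) x l} := by
    ext ω
    simp only [Set.mem_iUnion, Set.mem_setOf_eq]
    constructor
    · intro hconn
      obtain ⟨l, h1, h2⟩ := List.exists_isChain_cons_of_relationReflTransGen hconn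
      exact ⟨l, h2, h1⟩
    · rintro ⟨l, h2, h1⟩
      exact List.relationReflTransGen_of_exists_isChain_cons l h1 h2
  rw [h]
  exact MeasurableSet.iUnion fun l => MeasurableSet.iUnion fun _ =>
    measurableSet_chain f l x

lemma measurableSet_cluster_eq [Countable G] [Countable ι] (f : ι → G) (A : Set G) :
    MeasurableSet {ω : Config (G × ι) | cluster f ω = A} := by
  have h : {ω : Config (G × ι) | cluster f ω = A} =
      ⋂ x : G, {ω : Config (G × ι) | Conn f ω 1 x ↔ x ∈ A} := by
    ext ω
    simp only [Set.mem_iInter, Set.mem_setOf_eq]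
    constructor
    · intro hc x
      rw [← hc]; rfl
    · intro hx
      ext x
      exact (hx x)
  rw [h]
  refine MeasurableSet.iInter fun x => ?_
  by_cases hx : x ∈ A
  · have : {ω : Config (G × ι) | Conn f ω 1 x ↔ x ∈ A}
        = {ω : Config (G × ι) | Conn f ω 1 x} ∪ ∅ := by
      ext ω; simp [hx]
    rw [this]
    exact (measurableSet_conn f 1 x).union MeasurableSet.empty
  · have : {ω : Config (G × ι) | Conn f ω 1 x ↔ x ∈ A}
        = {ω : Config (G × ι) | Conn f ω 1 x}ᶜ := by
      ext ω; simp [hx]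
    rw [this]
    exact (measurableSet_conn f 1 x).compl

lemma measurableSet_encard [Countable G] [Countable ι] (f : ι → G) (n : ℕ) :
    MeasurableSet {ω : Config (G × ι) | (cluster f ω).encard = (n : ℕ∞)} := by
  have h : {ω : Config (G × ι) | (cluster f ω).encard = (n : ℕ∞)} =
      ⋃ A : Finset G, ⋃ (_ : A.card = n),
        {ω : Config (G × ι) | cluster f ω = (A : Set G)} := by
    ext ω
    simp only [Set.mem_iUnion, Set.mem_setOf_eq]
    constructor
    · intro hc
      have hfin : (cluster f ω).Finite := Set.finite_of_encard_eq_coe hc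
      refine ⟨hfin.toFinset, ?_, by simp⟩
      have := hfin.encard_eq_coe_toFinset_card
      rw [hc] at this
      exact_mod_cast this.symm
    · rintro ⟨A, hcard, hA⟩
      rw [hA, Set.encard_coe_eq_coe_finsetCard, hcard]
  rw [h]
  exact MeasurableSet.iUnion fun A => MeasurableSet.iUnion fun _ =>
    measurableSet_cluster_eq f (A : Set G)

lemma bernoulli_univ {E : Type*} {p : ℝ} {μ : Measure (Config E)}
    (hμ : IsBernoulli p μ) : μ Set.univ = 1 := by
  have := hμ ∅ (fun _ => true)
  simpa using this

/-- The cluster-size coefficients of the walk-through function. -/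
noncomputable def coeff (f : ι → G) (μ : Measure (Config (G × ι))) (n : ℕ) : ℝ :=
  (μ {ω | (cluster f ω).encard = ((n + 1 : ℕ) : ℕ∞)}).toReal

lemma coeff_nonneg (f : ι → G) (μ : Measure (Config (G × ι))) (n : ℕ) :
    0 ≤ coeff f μ n := ENNReal.toReal_nonneg

lemma coeff_summable [Countable G] [Countable ι] {p : ℝ} (f : ι → G)
    {μ : Measure (Config (G × ι))} (hμ : IsBernoulli p μ) :
    Summable (coeff f μ) ∧ ∑' n, coeff f μ n ≤ 1 := by
  set A : ℕ → Set (Config (G × ι)) :=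
    fun n => {ω | (cluster f ω).encard = ((n + 1 : ℕ) : ℕ∞)} with hA
  have hmeas : ∀ n, MeasurableSet (A n) := fun n => measurableSet_encard f (n + 1)
  have hdisj : Pairwise (Function.onFun Disjoint A) := by
    intro m n hmn
    rw [Function.onFun, Set.disjoint_left]
    intro ω hm hn
    apply hmn
    have : ((m + 1 : ℕ) : ℕ∞) = ((n + 1 : ℕ) : ℕ∞) := by
      rw [← hm, ← hn]
    exact_mod_cast Nat.succ_injective (by exact_mod_cast this)
  have hsum : ∑' n, μ (A n) ≤ 1 := by
    rw [← measure_iUnion hdisj hmeas]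
    rw [← bernoulli_univ hμ]
    exact measure_mono (Set.subset_univ _)
  have hne : ∑' n, μ (A n) ≠ ⊤ := fun h => by simp [h] at hsum
  have hfin : ∀ n, μ (A n) ≠ ⊤ := fun n =>
    ENNReal.ne_top_of_tsum_ne_top hne n
  constructor
  · exact ENNReal.summable_toReal hne
  · have heq : ∑' n, coeff f μ n = (∑' n, μ (A n)).toReal :=
      (ENNReal.tsum_toReal_eq hfin).symm
    rw [heq]
    have h1 : (∑' n, μ (A n)).toReal ≤ (1 : ℝ≥0∞).toReal :=
      ENNReal.toReal_mono (by simp) hsum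
    simpa using h1

section Analysis

variable {a : ℕ → ℝ}

/-- The abstract walk-through function. -/
noncomputable def W (a : ℕ → ℝ) (t : ℝ) : ℝ := 1 - ∑' n, (1 - t) ^ n * a n

lemma summable_W (ha0 : ∀ n, 0 ≤ a n) (hs : Summable a) {t : ℝ}
    (ht : t ∈ Set.Icc (0 : ℝ) 1) : Summable fun n => (1 - t) ^ n * a n := by
  refine Summable.of_nonneg_of_le (fun n => ?_) (fun n => ?_) hs
  · exact mul_nonneg (pow_nonneg (by linarith [ht.2]) n) (ha0 n)
  · have h1 : (1 - t) ^ n ≤ 1 :=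
      pow_le_one₀ (by linarith [ht.2]) (by linarith [ht.1])
    exact mul_le_of_le_one_left (ha0 n) h1

lemma tsum_W_nonneg (ha0 : ∀ n, 0 ≤ a n) {t : ℝ} (ht : t ∈ Set.Icc (0 : ℝ) 1) :
    0 ≤ ∑' n, (1 - t) ^ n * a n :=
  tsum_nonneg fun n => mul_nonneg (pow_nonneg (by linarith [ht.2]) n) (ha0 n)

lemma tsum_W_le (ha0 : ∀ n, 0 ≤ a n) (hs : Summable a) (h1 : ∑' n, a n ≤ 1)
    {t : ℝ} (ht : t ∈ Set.Icc (0 : ℝ) 1) : ∑' n, (1 - t) ^ n * a n ≤ 1 := by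
  refine le_trans (Summable.tsum_le_tsum (fun n => ?_) (summable_W ha0 hs ht) hs) h1
  have hp : (1 - t) ^ n ≤ 1 := pow_le_one₀ (by linarith [ht.2]) (by linarith [ht.1])
  exact mul_le_of_le_one_left (ha0 n) hp

lemma W_mapsTo (ha0 : ∀ n, 0 ≤ a n) (hs : Summable a) (h1 : ∑' n, a n ≤ 1) :
    Set.MapsTo (W a) (Set.Icc (0 : ℝ) 1) (Set.Icc (0 : ℝ) 1) := by
  intro t ht
  constructor
  · simp only [W]; linarith [tsum_W_le ha0 hs h1 ht]
  · simp only [W]; linarith [tsum_W_nonneg ha0 ht]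

lemma W_monotoneOn (ha0 : ∀ n, 0 ≤ a n) (hs : Summable a) :
    MonotoneOn (W a) (Set.Icc (0 : ℝ) 1) := by
  intro x hx y hy hxy
  have h : ∑' n, (1 - y) ^ n * a n ≤ ∑' n, (1 - x) ^ n * a n := by
    refine Summable.tsum_le_tsum (fun n => ?_) (summable_W ha0 hs hy) (summable_W ha0 hs hx)
    exact mul_le_mul_of_nonneg_right
      (pow_le_pow_left₀ (by linarith [hy.2]) (by linarith) n) (ha0 n)
  simp only [W]
  linarith

lemma W_concaveOn (ha0 : ∀ n, 0 ≤ a n) (hs : Summable a) :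
    ConcaveOn ℝ (Set.Icc (0 : ℝ) 1) (W a) := by
  refine ⟨convex_Icc 0 1, fun x hx y hy α β hα hβ hab => ?_⟩
  simp only [smul_eq_mul, W]
  have hz : α • x + β • y ∈ Set.Icc (0 : ℝ) 1 := (convex_Icc 0 1) hx hy hα hβ hab
  have key : ∑' n, (1 - (α * x + β * y)) ^ n * a n ≤
      α * (∑' n, (1 - x) ^ n * a n) + β * (∑' n, (1 - y) ^ n * a n) := by
    have hsx := summable_W ha0 hs hx
    have hsy := summable_W ha0 hs hy
    have hsz := summable_W ha0 hs hz
    have hrhs : (∑' n, (α * ((1 - x) ^ n * a n) + β * ((1 - y) ^ n * a n)))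
        = α * (∑' n, (1 - x) ^ n * a n) + β * (∑' n, (1 - y) ^ n * a n) := by
      rw [Summable.tsum_add (hsx.mul_left α) (hsy.mul_left β), tsum_mul_left, tsum_mul_left]
    rw [← hrhs]
    refine Summable.tsum_le_tsum (fun n => ?_) (by simpa [smul_eq_mul] using hsz)
      ((hsx.mul_left α).add (hsy.mul_left β))
    have hconv := (convexOn_pow n).2 (Set.mem_Ici.2 (by linarith [hx.2] : (0:ℝ) ≤ 1 - x))
      (Set.mem_Ici.2 (by linarith [hy.2] : (0:ℝ) ≤ 1 - y)) hα hβ hab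
    simp only [smul_eq_mul] at hconv
    have heq : 1 - (α * x + β * y) = α * (1 - x) + β * (1 - y) := by ring_nf; linarith
    rw [heq]
    calc (α * (1 - x) + β * (1 - y)) ^ n * a n
        ≤ (α * (1 - x) ^ n + β * (1 - y) ^ n) * a n :=
          mul_le_mul_of_nonneg_right hconv (ha0 n)
      _ = α * ((1 - x) ^ n * a n) + β * ((1 - y) ^ n * a n) := by ring
  nlinarith [key]

end Analysis

lemma wt_eq_W (f : ι → G) (μ : Measure (Config (G × ι))) :
    wt f μ = W (coeff f μ) := rfl

/-- A finitely generated group is countable. -/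
lemma countable_of_closure {S : Set G} (hfin : S.Finite)
    (hgen : Subgroup.closure S = ⊤) : Countable G := by
  have hfin' : (S ∪ S⁻¹).Finite := hfin.union hfin.inv
  haveI : Countable ↥(S ∪ S⁻¹) := hfin'.countable.to_subtype
  have hsurj : Function.Surjective
      (fun l : List ↥(S ∪ S⁻¹) => (l.map Subtype.val).prod) := by
    intro x
    have hx : x ∈ Submonoid.closure (S ∪ S⁻¹) := by
      rw [← Subgroup.closure_toSubmonoid, hgen]
      trivial
    obtain ⟨l, hmem, hprod⟩ := Submonoid.exists_list_of_mem_closure hx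
    have hmap : ∀ (l : List G) (h : ∀ y ∈ l, y ∈ S ∪ S⁻¹),
        (l.pmap (fun y hy => (⟨y, hy⟩ : ↥(S ∪ S⁻¹))) h).map Subtype.val = l := by
      intro l
      induction l with
      | nil => intro _; rfl
      | cons a t ih => intro h; simp only [List.pmap, List.map_cons, ih]
    refine ⟨l.pmap (fun y hy => (⟨y, hy⟩ : ↥(S ∪ S⁻¹))) hmem, ?_⟩
    show (List.map Subtype.val (l.pmap (fun y hy => (⟨y, hy⟩ : ↥(S ∪ S⁻¹))) hmem)).prod = x
    rw [hmap l hmem]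
    exact hprod
  exact hsurj.countable

end PercAux

open PercAux

/-- For finitely generated groups `G₁, G₂` with finite generating sets
and `0 < p < min(p_c(G₁), p_c(G₂))`, the function `t ↦ g₂(p, g₁(p,t)) - t` is concave on
`[0,1]`, where `gᵢ` is the walk-through function of `(Gᵢ, Sᵢ)`. -/
theorem walk_through_composition_concave
    {G₁ G₂ : Type*} [Group G₁] [Group G₂]
    (S₁ : Set G₁) (S₂ : Set G₂) (hfin₁ : S₁.Finite) (hfin₂ : S₂.Finite)
    (hgen₁ : Subgroup.closure S₁ = ⊤) (hgen₂ : Subgroup.closure S₂ = ⊤)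
    (μ₁ : ℝ → Measure (Config (G₁ × S₁))) (μ₂ : ℝ → Measure (Config (G₂ × S₂)))
    (hμ₁ : ∀ q ∈ Set.Icc (0 : ℝ) 1, IsBernoulli q (μ₁ q))
    (hμ₂ : ∀ q ∈ Set.Icc (0 : ℝ) 1, IsBernoulli q (μ₂ q))
    (p : ℝ) (hp0 : 0 < p)
    (hppc : p < min (pc (setGens S₁) μ₁) (pc (setGens S₂) μ₂)) :
    ConcaveOn ℝ (Set.Icc (0 : ℝ) 1)
      (fun t => wt (setGens S₂) (μ₂ p) (wt (setGens S₁) (μ₁ p) t) - t) := by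
  haveI : Countable G₁ := countable_of_closure hfin₁ hgen₁
  haveI : Countable G₂ := countable_of_closure hfin₂ hgen₂
  haveI : Countable S₁ := hfin₁.countable.to_subtype
  haveI : Countable S₂ := hfin₂.countable.to_subtype
  -- p ∈ [0,1]
  have hpc1 : pc (setGens S₁) μ₁ ≤ 1 := by
    apply csInf_le
    · refine ⟨0, fun q hq => ?_⟩
      rcases hq with hq | hq
      · exact hq.1.1
      · simp only [Set.mem_singleton_iff] at hq; linarith [hq ▸ (zero_le_one (α := ℝ))]
    · exact Or.inr rfl
  have hp1 : p < 1 := lt_of_lt_of_le (lt_of_lt_of_le hppc (min_le_left _ _)) hpc1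
  have hpI : p ∈ Set.Icc (0 : ℝ) 1 := ⟨hp0.le, hp1.le⟩
  have hb₁ := hμ₁ p hpI
  have hb₂ := hμ₂ p hpI
  -- coefficient facts
  obtain ⟨hs₁, hl₁⟩ := coeff_summable (setGens S₁) hb₁
  obtain ⟨hs₂, hl₂⟩ := coeff_summable (setGens S₂) hb₂
  have ha₁ := coeff_nonneg (setGens S₁) (μ₁ p)
  have ha₂ := coeff_nonneg (setGens S₂) (μ₂ p)
  set a₁ := coeff (setGens S₁) (μ₁ p)
  set a₂ := coeff (setGens S₂) (μ₂ p)
  have hw₁ : wt (setGens S₁) (μ₁ p) = W a₁ := rfl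
  have hw₂ : wt (setGens S₂) (μ₂ p) = W a₂ := rfl
  rw [hw₁, hw₂]
  have hmap₁ := W_mapsTo ha₁ hs₁ hl₁
  have hcon₁ := W_concaveOn ha₁ hs₁
  have hcon₂ := W_concaveOn ha₂ hs₂
  have hmono₂ := W_monotoneOn ha₂ hs₂
  refine ⟨convex_Icc 0 1, fun x hx y hy α β hα hβ hab => ?_⟩
  have hz : α • x + β • y ∈ Set.Icc (0 : ℝ) 1 := (convex_Icc 0 1) hx hy hα hβ hab
  have hg₁x : W a₁ x ∈ Set.Icc (0 : ℝ) 1 := hmap₁ hx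
  have hg₁y : W a₁ y ∈ Set.Icc (0 : ℝ) 1 := hmap₁ hy
  have hcomb : α • W a₁ x + β • W a₁ y ∈ Set.Icc (0 : ℝ) 1 :=
    (convex_Icc 0 1) hg₁x hg₁y hα hβ hab
  have h1 : α • W a₂ (W a₁ x) + β • W a₂ (W a₁ y) ≤
      W a₂ (α • W a₁ x + β • W a₁ y) := hcon₂.2 hg₁x hg₁y hα hβ hab
  have h2 : α • W a₁ x + β • W a₁ y ≤ W a₁ (α • x + β • y) :=
    hcon₁.2 hx hy hα hβ hab
  have h3 : W a₂ (α • W a₁ x + β • W a₁ y) ≤ W a₂ (W a₁ (α • x + β • y)) :=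
    hmono₂ hcomb (hmap₁ hz) h2
  simp only [smul_eq_mul] at h1 h3 ⊢
  nlinarith [h1, h3]
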